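/- (Feuerbach) The distance from the excenter I_c opposite vertex C to the nine-point center N equals R/2 + r_c, where R is the circumradius and r_c the exradius opposite C; hence the nine-point circle is externally tangent to the excircle opposite C. -/

import Mathlib

set_option maxHeartbeats 1000000

open RealInnerProductSpace

lemma norm_comb_sq (u v w : EuclideanSpace ℝ (Fin 2)) (x y z : ℝ) :
    ‖x • u + y • v + z • w‖ ^ 2 = x ^ 2 * ‖u‖ ^ 2 + y ^ 2 * ‖v‖ ^ 2 + z ^ 2 * ‖w‖ ^ 2
      + 2 * x * y * ⟪u, v⟫ + 2 * x * z * ⟪u, w⟫ + 2 * y * z * ⟪v, w⟫ := by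
  simp only [← real_inner_self_eq_norm_sq, inner_add_left, inner_add_right,
    real_inner_smul_left, real_inner_smul_right, real_inner_comm v u,
    real_inner_comm w u, real_inner_comm w v]
  ring

theorem feuerbach_excircle
    (u v w : EuclideanSpace ℝ (Fin 2)) (R a b c s F rc : ℝ)
    (hu : ‖u‖ = R) (hv : ‖v‖ = R) (hw : ‖w‖ = R)
    (ha : a = ‖v - w‖) (hb : b = ‖u - w‖) (hc : c = ‖u - v‖)
    (ha0 : 0 < a) (hb0 : 0 < b) (hc0 : 0 < c)
    (hs : s = (a + b + c) / 2) (hsc : c < s)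
    (hF : F ^ 2 = s * (s - a) * (s - b) * (s - c)) (hF0 : 0 < F)
    (hrc : rc = F / (s - c))
    (hRrc : R * rc = a * b * c / (4 * (s - c))) :
    ‖(2⁻¹ : ℝ) • (u + v + w) - (2 * (s - c))⁻¹ • (a • u + b • v - c • w)‖ = R / 2 + rc := by
  have ht : (0:ℝ) < s - c := by linarith
  have ht' : s - c ≠ 0 := ht.ne'
  have hR : 0 ≤ R := hu ▸ norm_nonneg u
  have hrc0 : 0 < rc := by rw [hrc]; positivity
  have hrc2 : rc ^ 2 * (s - c) = s * (s - a) * (s - b) := by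
    have hFrc : F = rc * (s - c) := by rw [hrc, div_mul_cancel₀ F ht']
    have : (rc * (s - c)) ^ 2 = s * (s - a) * (s - b) * (s - c) := by rw [← hFrc]; exact hF
    field_simp at this ⊢
    nlinarith [this]
  have hp : ⟪u, v⟫ = R ^ 2 - c ^ 2 / 2 := by
    have h1 : c ^ 2 = ‖u - v‖ ^ 2 := by rw [hc]
    rw [norm_sub_sq_real, hu, hv] at h1; linarith
  have hq : ⟪u, w⟫ = R ^ 2 - b ^ 2 / 2 := by
    have h1 : b ^ 2 = ‖u - w‖ ^ 2 := by rw [hb]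
    rw [norm_sub_sq_real, hu, hw] at h1; linarith
  have hr : ⟪v, w⟫ = R ^ 2 - a ^ 2 / 2 := by
    have h1 : a ^ 2 = ‖v - w‖ ^ 2 := by rw [ha]
    rw [norm_sub_sq_real, hv, hw] at h1; linarith
  have hx : (2⁻¹ : ℝ) • (u + v + w) - (2 * (s - c))⁻¹ • (a • u + b • v - c • w)
      = ((2:ℝ)⁻¹ - a * (2 * (s - c))⁻¹) • u + ((2:ℝ)⁻¹ - b * (2 * (s - c))⁻¹) • v
        + ((2:ℝ)⁻¹ + c * (2 * (s - c))⁻¹) • w := by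
    module
  have hsq : ‖(2⁻¹ : ℝ) • (u + v + w) - (2 * (s - c))⁻¹ • (a • u + b • v - c • w)‖ ^ 2
      = (R / 2 + rc) ^ 2 := by
    rw [hx, norm_comb_sq, hu, hv, hw, hp, hq, hr]
    have hRrc' : R * rc * (4 * (s - c)) = a * b * c := by
      field_simp at hRrc; linarith [hRrc]
    subst hs
    have htne : a + b - c ≠ 0 := by intro h; apply ht'; linarith [h]
    set k := (2 * ((a + b + c) / 2 - c))⁻¹ with hk0
    have hk : k * (a + b - c) = 1 := by
      have h2t : 2 * ((a + b + c) / 2 - c) = a + b - c := by ring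
      rw [hk0, h2t]
      field_simp
    have h1 : (2:ℝ)⁻¹ - a * k = (b - c - a) * k / 2 := by linear_combination (-(1:ℝ)/2) * hk
    have h2 : (2:ℝ)⁻¹ - b * k = (a - c - b) * k / 2 := by linear_combination (-(1:ℝ)/2) * hk
    have h3 : (2:ℝ)⁻¹ + c * k = (a + b + c) * k / 2 := by linear_combination (-(1:ℝ)/2) * hk
    rw [h1, h2, h3]
    have hk2 : k ^ 2 * (a + b - c) ^ 2 = 1 := by linear_combination (k * (a + b - c) + 1) * hk
    linear_combination (R ^ 2 / 4 + R * rc + rc ^ 2) * hk2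
      - (k ^ 2 / 2 * (a + b - c)) * hRrc' - (2 * k ^ 2 * (a + b - c)) * hrc2
  have hnn : 0 ≤ R / 2 + rc := by positivity
  nlinarith [hsq, norm_nonneg ((2⁻¹ : ℝ) • (u + v + w) - (2 * (s - c))⁻¹ • (a • u + b • v - c • w)), hnn]
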